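/- There exists a joint distribution of (X, G, Y_t, Y_{t+1}) satisfying overlap (e(X) ≤ 1−δ) and choices of correctly specified ν(X) = E[Y_{t+1}|X,G=0], μ(X) = E[Y_t|X,G=0], for which Var(φ^wt) − Var(φ^dr) < 0; i.e., the double-robust DID estimator is not always asymptotically at least as efficient as the weighting estimator even when all models are correct. -/

import Mathlib

open MeasureTheory ProbabilityTheory

noncomputable section Stmt12Aux


abbrev Z12 := ℝ × ℝ × ℝ × ℝ
def z0 : Z12 := (0, 0, 0, 1)
def z1 : Z12 := (0, 1, 0, -1)
def μ0 : Measure Z12 := (1/2 : ENNReal) • Measure.dirac z0 + (1/2 : ENNReal) • Measure.dirac z1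

lemma integrable_dirac' {α : Type*} [MeasurableSpace α] [MeasurableSingletonClass α]
    (f : α → ℝ) (a : α) : Integrable f (Measure.dirac a) := by
  have hae : f =ᵐ[Measure.dirac a] fun _ => f a := by rw [MeasureTheory.ae_dirac_eq]; rfl
  exact (integrable_congr hae).2 (integrable_const _)

instance : IsProbabilityMeasure μ0 := by
  constructor
  simp [μ0, Measure.add_apply]
  rw [ENNReal.inv_two_add_inv_two]

lemma integral_μ0 (f : Z12 → ℝ) : ∫ z, f z ∂μ0 = (1/2) * f z0 + (1/2) * f z1 := by
  rw [μ0, integral_add_measure ((integrable_dirac' f z0).smul_measure (by norm_num))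
    ((integrable_dirac' f z1).smul_measure (by norm_num)),
    integral_smul_measure, integral_smul_measure, integral_dirac, integral_dirac]
  norm_num

lemma ae_μ0 {p : Z12 → Prop} (h0 : p z0) (h1 : p z1) : ∀ᵐ z ∂μ0, p z := by
  rw [μ0, ae_add_measure_iff]
  constructor <;> refine Measure.ae_smul_measure ?_ _ <;>
    rw [MeasureTheory.ae_dirac_eq] <;> assumption

lemma aesm_μ0 (f : Z12 → ℝ) : AEStronglyMeasurable f μ0 := by
  refine ⟨fun z => if z.2.1 = 1 then f z1 else f z0, ?_, ?_⟩
  · exact (Measurable.ite ((measurable_fst.comp measurable_snd) (measurableSet_singleton 1))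
      measurable_const measurable_const).stronglyMeasurable
  · refine ae_μ0 ?_ ?_ <;> simp [z0, z1]

lemma memLp_μ0 (f : Z12 → ℝ) : MemLp f 2 μ0 := by
  refine MemLp.of_bound (aesm_μ0 f) (max ‖f z0‖ ‖f z1‖) (ae_μ0 ?_ ?_)
  · exact le_max_left _ _
  · exact le_max_right _ _

def S0 : Set Z12 := {z | z.2.1 = 0}
def S1 : Set Z12 := {z | z.2.1 = 1}

lemma measS0 : MeasurableSet S0 :=
  (measurable_fst.comp measurable_snd) (measurableSet_singleton 0)
lemma measS1 : MeasurableSet S1 :=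
  (measurable_fst.comp measurable_snd) (measurableSet_singleton 1)

lemma μ0_S0 : μ0 S0 = 1/2 := by
  have h0 : z0 ∈ S0 := rfl
  have h1 : z1 ∉ S0 := by simp [S0, z1]
  rw [μ0, Measure.add_apply, Measure.smul_apply, Measure.smul_apply,
    Measure.dirac_apply' _ measS0, Measure.dirac_apply' _ measS0,
    Set.indicator_of_mem h0, Set.indicator_of_notMem h1]
  simp

lemma μ0_S1 : μ0 S1 = 1/2 := by
  have h0 : z0 ∉ S1 := by simp [S1, z0]
  have h1 : z1 ∈ S1 := rfl
  rw [μ0, Measure.add_apply, Measure.smul_apply, Measure.smul_apply,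
    Measure.dirac_apply' _ measS1, Measure.dirac_apply' _ measS1,
    Set.indicator_of_notMem h0, Set.indicator_of_mem h1]
  simp

lemma cond_eq : μ0[|S0] = Measure.dirac z0 := by
  classical
  have h0 : z0 ∈ S0 := rfl
  have h1 : z1 ∉ S0 := by simp [S0, z1]
  have hres : μ0.restrict S0 = (1/2 : ENNReal) • Measure.dirac z0 := by
    rw [μ0, Measure.restrict_add, Measure.restrict_smul, Measure.restrict_smul,
      MeasureTheory.restrict_dirac' measS0, MeasureTheory.restrict_dirac' measS0,
      if_pos h0, if_neg h1, smul_zero, add_zero]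
  rw [ProbabilityTheory.cond, hres, μ0_S0, smul_smul]
  norm_num
  rw [ENNReal.mul_inv_cancel (by norm_num) (by norm_num), one_smul]

def mX12 : MeasurableSpace Z12 := MeasurableSpace.comap (fun z : Z12 => z.1) inferInstance
lemma hmX12 : mX12 ≤ (inferInstance : MeasurableSpace Z12) := measurable_fst.comap_le

lemma comap_fiber {α β : Type*} [mβ : MeasurableSpace β] {f : α → β} {g : α → ℝ}
    (hg : @Measurable α ℝ (MeasurableSpace.comap f mβ) _ g) {a b : α} (h : f a = f b) :
    g a = g b := by
  obtain ⟨t, ht, h2⟩ := hg (measurableSet_singleton (g a))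
  have ha : a ∈ f ⁻¹' t := by rw [h2]; rfl
  have hb : b ∈ f ⁻¹' t := by simpa [Set.mem_preimage, ← h] using ha
  rw [h2] at hb
  exact hb.symm

lemma condexp_fiber {ν : Measure Z12} (f : Z12 → ℝ) :
    MeasureTheory.condExp mX12 ν f z0 = MeasureTheory.condExp mX12 ν f z1 :=
  comap_fiber (stronglyMeasurable_condExp.measurable) (by rfl)

lemma e_val : MeasureTheory.condExp mX12 μ0 (fun z : Z12 => z.2.1) z0 = 1/2 ∧
    MeasureTheory.condExp mX12 μ0 (fun z : Z12 => z.2.1) z1 = 1/2 := by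
  set c := MeasureTheory.condExp mX12 μ0 (fun z : Z12 => z.2.1) with hc
  have heq : c z0 = c z1 := condexp_fiber _
  have hint : ∫ z, c z ∂μ0 = ∫ z, (fun z : Z12 => z.2.1) z ∂μ0 := integral_condExp hmX12
  rw [integral_μ0, integral_μ0, heq] at hint
  simp only [z0, z1] at hint heq ⊢
  constructor <;> linarith

lemma ν_val : MeasureTheory.condExp mX12 (μ0[|S0]) (fun z : Z12 => z.2.2.2) z0 = 1 ∧
    MeasureTheory.condExp mX12 (μ0[|S0]) (fun z : Z12 => z.2.2.2) z1 = 1 := by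
  rw [cond_eq]
  set c := MeasureTheory.condExp mX12 (Measure.dirac z0) (fun z : Z12 => z.2.2.2) with hc
  have heq : c z0 = c z1 := condexp_fiber _
  have hint : ∫ z, c z ∂Measure.dirac z0 = ∫ z, (fun z : Z12 => z.2.2.2) z ∂Measure.dirac z0 :=
    integral_condExp hmX12
  rw [integral_dirac, integral_dirac] at hint
  simp only [z0, z1] at hint heq ⊢
  constructor <;> linarith

lemma μf_val : MeasureTheory.condExp mX12 (μ0[|S0]) (fun z : Z12 => z.2.2.1) z0 = 0 ∧
    MeasureTheory.condExp mX12 (μ0[|S0]) (fun z : Z12 => z.2.2.1) z1 = 0 := by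
  rw [cond_eq]
  set c := MeasureTheory.condExp mX12 (Measure.dirac z0) (fun z : Z12 => z.2.2.1) with hc
  have heq : c z0 = c z1 := condexp_fiber _
  have hint : ∫ z, c z ∂Measure.dirac z0 = ∫ z, (fun z : Z12 => z.2.2.1) z ∂Measure.dirac z0 :=
    integral_condExp hmX12
  rw [integral_dirac, integral_dirac] at hint
  simp only [z0, z1] at hint heq ⊢
  constructor <;> linarith

lemma variance_μ0 (f : Z12 → ℝ) :
    variance f μ0 = (1/2 * (f z0)^2 + 1/2 * (f z1)^2) - (1/2 * f z0 + 1/2 * f z1)^2 := by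
  rw [variance_eq_sub (memLp_μ0 f), integral_μ0, integral_μ0]
  simp [Pi.pow_apply]

end Stmt12Aux

/-- There exists a joint distribution of `(X, G, Y_t, Y_{t+1})`
(a probability measure on `ℝ⁴`, with coordinates `X, G, Y_t, Y_{t+1}`) satisfying
overlap (`e(X) ≤ 1−δ` with `e(X) = E[G|σ(X)]`), with correctly specified outcome
models `ν(X) = E[Y_{t+1}|X,G=0]`, `μ(X) = E[Y_t|X,G=0]` and centering
`τ = E[φ-kernel]` so both influence functions have mean zero, for which
`Var(φ^wt) − Var(φ^dr) < 0`: the double-robust DID estimator is not always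
asymptotically at least as efficient as the weighting estimator even when all
models are correct. -/
theorem stmt_12 :
    ∃ (μ : Measure (ℝ × ℝ × ℝ × ℝ)) (_ : IsProbabilityMeasure μ) (δ π τ : ℝ),
      -- coordinates: X = z.1, G = z.2.1, Y_t = z.2.2.1, Y_{t+1} = z.2.2.2
      (∀ᵐ z ∂μ, z.2.1 = 0 ∨ z.2.1 = 1) ∧
      μ {z | z.2.1 = 0} ≠ 0 ∧
      π = (μ {z | z.2.1 = 1}).toReal ∧ 0 < π ∧
      MemLp (fun z : ℝ × ℝ × ℝ × ℝ => z.2.2.1) 2 μ ∧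
      MemLp (fun z : ℝ × ℝ × ℝ × ℝ => z.2.2.2) 2 μ ∧
      0 < δ ∧
      -- e = true propensity score, ν/μf = true outcome regressions on {G = 0}
      (let mX : MeasurableSpace (ℝ × ℝ × ℝ × ℝ) :=
          MeasurableSpace.comap (fun z : ℝ × ℝ × ℝ × ℝ => z.1) inferInstance
        let e := MeasureTheory.condExp mX μ (fun z => z.2.1)
        let ν := MeasureTheory.condExp mX (μ[|{z | z.2.1 = 0}]) (fun z => z.2.2.2)
        let μf := MeasureTheory.condExp mX (μ[|{z | z.2.1 = 0}]) (fun z => z.2.2.1)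
        (∀ᵐ z ∂μ, 0 ≤ e z) ∧ (∀ᵐ z ∂μ, e z ≤ 1 - δ) ∧
        τ = ∫ z, (z.2.1 - e z) * (z.2.2.2 - z.2.2.1) / (π * (1 - e z)) ∂μ ∧
        variance (fun z => (z.2.1 - e z) * (z.2.2.2 - z.2.2.1) / (π * (1 - e z)) - τ) μ
          < variance (fun z =>
              (z.2.1 - e z) * (z.2.2.2 - z.2.2.1 - (ν z - μf z)) / (π * (1 - e z)) - τ) μ) := by
  refine ⟨μ0, inferInstance, 1/2, 1/2, -2, ?_, ?_, ?_, ?_, ?_, ?_, ?_, ?_, ?_, ?_, ?_⟩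
  · exact ae_μ0 (Or.inl rfl) (Or.inr rfl)
  · show μ0 S0 ≠ 0
    rw [μ0_S0]; norm_num
  · show (1/2 : ℝ) = (μ0 S1).toReal
    rw [μ0_S1]; simp
  · norm_num
  · exact memLp_μ0 _
  · exact memLp_μ0 _
  · norm_num
  · refine ae_μ0 ?_ ?_
    · show (0:ℝ) ≤ MeasureTheory.condExp mX12 μ0 (fun z : Z12 => z.2.1) z0
      rw [e_val.1]; norm_num
    · show (0:ℝ) ≤ MeasureTheory.condExp mX12 μ0 (fun z : Z12 => z.2.1) z1
      rw [e_val.2]; norm_num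
  · refine ae_μ0 ?_ ?_
    · show MeasureTheory.condExp mX12 μ0 (fun z : Z12 => z.2.1) z0 ≤ 1 - 1/2
      rw [e_val.1]; norm_num
    · show MeasureTheory.condExp mX12 μ0 (fun z : Z12 => z.2.1) z1 ≤ 1 - 1/2
      rw [e_val.2]; norm_num
  · show (-2 : ℝ) = ∫ z, (z.2.1 - MeasureTheory.condExp mX12 μ0 (fun z : Z12 => z.2.1) z) *
        (z.2.2.2 - z.2.2.1) / ((1/2 : ℝ) * (1 - MeasureTheory.condExp mX12 μ0 (fun z : Z12 => z.2.1) z)) ∂μ0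
    rw [integral_μ0, e_val.1, e_val.2]
    simp only [z0, z1]
    norm_num
  · show variance (fun z : Z12 => (z.2.1 - MeasureTheory.condExp mX12 μ0 (fun z : Z12 => z.2.1) z) *
        (z.2.2.2 - z.2.2.1) / ((1/2 : ℝ) *
          (1 - MeasureTheory.condExp mX12 μ0 (fun z : Z12 => z.2.1) z)) - (-2)) μ0
      < variance (fun z : Z12 => (z.2.1 - MeasureTheory.condExp mX12 μ0 (fun z : Z12 => z.2.1) z) *
        (z.2.2.2 - z.2.2.1 - (MeasureTheory.condExp mX12 (μ0[|S0]) (fun z : Z12 => z.2.2.2) z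
          - MeasureTheory.condExp mX12 (μ0[|S0]) (fun z : Z12 => z.2.2.1) z)) / ((1/2 : ℝ) *
          (1 - MeasureTheory.condExp mX12 μ0 (fun z : Z12 => z.2.1) z)) - (-2)) μ0
    rw [variance_μ0, variance_μ0]
    rw [e_val.1, e_val.2, ν_val.1, ν_val.2, μf_val.1, μf_val.2]
    simp only [z0, z1]
    norm_num
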